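/- Let (G, τ) be a Hausdorff topological group and let S = S(G,τ) be the set of all sequences converging to the identity in τ. Then a set U is sequentially open in τ_S if and only if it is sequentially open in τ; i.e., the sequential modifications of τ_S and τ coincide. -/

import Mathlib

open Filter Topology Pointwise

/-- `u` converges to the identity in the group topology `t`. -/
def TendstoOne {G : Type*} [Group G] (t : GroupTopology G) (u : ℕ → G) : Prop :=
  Filter.Tendsto u Filter.atTop (@nhds G t.toTopologicalSpace 1)

/-- The group topology `t` is Hausdorff. -/
def IsHausdorffGT {G : Type*} [Group G] (t : GroupTopology G) : Prop :=
  @T2Space G t.toTopologicalSpace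

/-- `S` is a `T_s`-set of sequences: some Hausdorff group topology makes every
sequence of `S` converge to the identity. -/
def IsTsSet {G : Type*} [Group G] (S : Set (ℕ → G)) : Prop :=
  ∃ t : GroupTopology G, IsHausdorffGT t ∧ ∀ u ∈ S, TendstoOne t u

/-- `τ` is the finest Hausdorff group topology on `G` in which every sequence of `S`
converges to the identity (recall that in Mathlib's order on topologies, finer = smaller). -/
def IsTauS {G : Type*} [Group G] (S : Set (ℕ → G)) (τ : GroupTopology G) : Prop :=
  IsHausdorffGT τ ∧ (∀ u ∈ S, TendstoOne τ u) ∧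
    ∀ t : GroupTopology G, IsHausdorffGT t → (∀ u ∈ S, TendstoOne t u) → τ ≤ t

/-- The given topological-group structure on `G`, as a term of `GroupTopology G`. -/
def ambientGT (G : Type*) [Group G] [τ : TopologicalSpace G] [h : IsTopologicalGroup G] :
    GroupTopology G := ⟨τ, h⟩

/-- The set of all sequences converging to the identity in a group topology. -/
def SeqConvOne {G : Type*} [Group G] (t : GroupTopology G) : Set (ℕ → G) :=
  {u | TendstoOne t u}

/-- `(G, τ)` is an `s`-group: its topology is the finest Hausdorff group topology in which
every member of some `T_s`-set of sequences converges to the identity. -/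
def IsSGroup (G : Type*) [Group G] [TopologicalSpace G] [IsTopologicalGroup G] [T2Space G] :
    Prop :=
  ∃ S : Set (ℕ → G), IsTauS S (ambientGT G)

/-- `U` is sequentially open with respect to the topology `τ`: every sequence converging to a
point of `U` is eventually in `U`. -/
def SeqOpenIn {X : Type*} (τ : TopologicalSpace X) (U : Set X) : Prop :=
  ∀ (x : X) (u : ℕ → X), x ∈ U → Filter.Tendsto u Filter.atTop (@nhds X τ x) →
    ∀ᶠ n in Filter.atTop, u n ∈ U

/-- for a Hausdorff topological group `(G, τ)` with `S = S(G, τ)` the set of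
all sequences converging to the identity and `τ_S` the finest Hausdorff group topology in
which all of them converge to the identity, a set is sequentially open in `τ_S` iff it is
sequentially open in `τ`: the sequential modifications of `τ_S` and `τ` coincide. -/

lemma conv_iff {G : Type*} [Group G] [τ : TopologicalSpace G] [IsTopologicalGroup G] [T2Space G]
    (τS : GroupTopology G) (hτS : IsTauS (SeqConvOne (ambientGT G)) τS) (u : ℕ → G) (x : G) :
    Filter.Tendsto u Filter.atTop (@nhds G τS.toTopologicalSpace x) ↔
      Filter.Tendsto u Filter.atTop (nhds x) := by
  have hle : τS ≤ ambientGT G :=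
    hτS.2.2 (ambientGT G) (by exact ‹T2Space G›) (fun v hv => hv)
  have hle' : τS.toTopologicalSpace ≤ τ := hle
  constructor
  · intro h
    exact h.mono_right (nhds_mono hle')
  · intro h
    have h1 : Filter.Tendsto (fun n => u n * x⁻¹) Filter.atTop (nhds 1) := by
      have := h.mul_const x⁻¹
      simpa using this
    have h2 : TendstoOne τS (fun n => u n * x⁻¹) := hτS.2.1 _ h1
    letI := τS.toTopologicalSpace
    haveI := τS.toIsTopologicalGroup
    have h3 : Filter.Tendsto (fun n => (u n * x⁻¹) * x) Filter.atTop (nhds (1 * x)) :=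
      Filter.Tendsto.mul_const x h2
    simpa using h3

theorem stmt12 {G : Type*} [Group G] [τ : TopologicalSpace G] [IsTopologicalGroup G] [T2Space G]
    (τS : GroupTopology G) (hτS : IsTauS (SeqConvOne (ambientGT G)) τS) :
    ∀ U : Set G, SeqOpenIn τS.toTopologicalSpace U ↔ SeqOpenIn τ U := by
  intro U
  constructor
  · intro h x u hx hu
    exact h x u hx ((conv_iff τS hτS u x).mpr hu)
  · intro h x u hx hu
    exact h x u hx ((conv_iff τS hτS u x).mp hu)
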